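/- Let Λ be a locally-convex k-graph. Then Λ^{≤ m+n} ⊆ Λ^{≤m} Λ^{≤n} for all m, n ∈ ℕ^k: every λ ∈ Λ^{≤ m+n} factors as λ = μν with μ ∈ Λ^{≤m} and ν ∈ Λ^{≤n}; indeed one may take μ = λ(0, m ∧ d(λ)) and ν = λ(m ∧ d(λ), d(λ)). -/

import Mathlib

/-- A `k`-graph: a countable small category `Λ` together with a degree functor
`d : Λ → ℕᵏ` satisfying the unique factorisation property.  Morphisms are called
paths; `comp μ ν` is the composite `μν`, only meaningful when `s μ = r ν`. -/
structure KGraph (k : ℕ) where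
  Path : Type
  Obj : Type
  pathCountable : Countable Path
  r : Path → Obj
  s : Path → Obj
  d : Path → Fin k → ℕ
  comp : Path → Path → Path
  ident : Obj → Path
  r_ident : ∀ v, r (ident v) = v
  s_ident : ∀ v, s (ident v) = v
  d_ident : ∀ v, d (ident v) = 0
  r_comp : ∀ μ ν, s μ = r ν → r (comp μ ν) = r μ
  s_comp : ∀ μ ν, s μ = r ν → s (comp μ ν) = s ν
  d_comp : ∀ μ ν, s μ = r ν → d (comp μ ν) = d μ + d ν
  ident_comp : ∀ lam, comp (ident (r lam)) lam = lam
  comp_ident : ∀ lam, comp lam (ident (s lam)) = lam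
  comp_assoc : ∀ lam μ ν, s lam = r μ → s μ = r ν →
    comp (comp lam μ) ν = comp lam (comp μ ν)
  factor : ∀ (lam : Path) (m n : Fin k → ℕ), d lam = m + n →
    ∃! p : Path × Path, s p.1 = r p.2 ∧ d p.1 = m ∧ d p.2 = n ∧ lam = comp p.1 p.2

/-- The `i`-th standard generator `e_i` of `ℕᵏ`. -/
def eVec {k : ℕ} (i : Fin k) : Fin k → ℕ := Pi.single i 1

namespace KGraph

variable {k : ℕ} (G : KGraph k)

/-- `lam` extends `μ`, i.e. `lam ∈ μΛ`. -/
def Extends (lam μ : G.Path) : Prop := ∃ α, G.s μ = G.r α ∧ lam = G.comp μ α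

/-- `CE(μ,ν)`: common extensions of `μ` and `ν`. -/
def CE (μ ν : G.Path) : Set G.Path := {lam | G.Extends lam μ ∧ G.Extends lam ν}

/-- `MCE(μ,ν)`: minimal common extensions of `μ` and `ν` (degree `d μ ⊔ d ν`). -/
def MCE (μ ν : G.Path) : Set G.Path :=
  {lam | lam ∈ G.CE μ ν ∧ G.d lam = G.d μ ⊔ G.d ν}

/-- `Λ^min(μ,ν)`: pairs `(α,β)` with `μα = νβ ∈ MCE(μ,ν)`. -/
def minPairs (μ ν : G.Path) : Set (G.Path × G.Path) :=
  {p | G.s μ = G.r p.1 ∧ G.s ν = G.r p.2 ∧ G.comp μ p.1 = G.comp ν p.2 ∧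
    G.comp μ p.1 ∈ G.MCE μ ν}

/-- `Λ` is finitely aligned if each `Λ^min(μ,ν)` is finite. -/
def FinitelyAligned : Prop := ∀ μ ν : G.Path, (G.minPairs μ ν).Finite

/-- `Λ` is locally-convex. -/
def LocallyConvex : Prop :=
  ∀ (i j : Fin k), i ≠ j → ∀ lam μ : G.Path,
    G.d lam = eVec i → G.d μ = eVec j → G.r lam = G.r μ →
    (∃ η, G.d η = eVec j ∧ G.r η = G.s lam) ∧
    (∃ η, G.d η = eVec i ∧ G.r η = G.s μ)

/-- `Λ^{≤ n}`. -/
def LeSet (n : Fin k → ℕ) : Set G.Path :=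
  {lam | G.d lam ≤ n ∧
    ∀ i, G.d lam i < n i → ¬∃ η, G.d η = eVec i ∧ G.r η = G.s lam}

open Classical in
/-- Split a path `lam` at degree `m ≤ d lam` into `(lam(0,m), lam(m, d lam))`. -/
noncomputable def split (lam : G.Path) (m : Fin k → ℕ) : G.Path × G.Path :=
  if h : m ≤ G.d lam then
    (G.factor lam m (G.d lam - m)
      (funext fun i => (Nat.add_sub_cancel' ((Pi.le_def.mp h) i)).symm)).exists.choose
  else (lam, lam)

/-- The segment `lam(m,n)` (for `m ≤ n ≤ d lam`), of degree `n - m`. -/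
noncomputable def seg (lam : G.Path) (m n : Fin k → ℕ) : G.Path :=
  (G.split (G.split lam n).1 m).2

/-- Specification of `split` when `m ≤ d lam`. -/
lemma split_spec (lam : G.Path) (m : Fin k → ℕ) (h : m ≤ G.d lam) :
    G.s (G.split lam m).1 = G.r (G.split lam m).2 ∧ G.d (G.split lam m).1 = m ∧
    G.d (G.split lam m).2 = G.d lam - m ∧ lam = G.comp (G.split lam m).1 (G.split lam m).2 := by
  rw [split, dif_pos h]
  exact (G.factor lam m (G.d lam - m)
    (funext fun i => (Nat.add_sub_cancel' ((Pi.le_def.mp h) i)).symm)).exists.choose_spec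

/-- Uniqueness: anything satisfying the spec equals `split`. -/
lemma split_eq (lam : G.Path) (m : Fin k → ℕ) (h : m ≤ G.d lam) (p : G.Path × G.Path)
    (hp : G.s p.1 = G.r p.2 ∧ G.d p.1 = m ∧ G.d p.2 = G.d lam - m ∧
      lam = G.comp p.1 p.2) : G.split lam m = p := by
  have hd : G.d lam = m + (G.d lam - m) :=
    funext fun i => (Nat.add_sub_cancel' ((Pi.le_def.mp h) i)).symm
  obtain ⟨q, hq, huniq⟩ := G.factor lam m (G.d lam - m) hd
  have h1 : G.split lam m = q := huniq _ (G.split_spec lam m h)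
  have h2 : p = q := huniq _ hp
  rw [h1, h2]

lemma deg_zero_ident (ν : G.Path) (h : G.d ν = 0) : ν = G.ident (G.r ν) := by
  have hd : G.d ν = 0 + 0 := by simp [h]
  obtain ⟨q, hq, huniq⟩ := G.factor ν 0 0 hd
  have h1 : (ν, G.ident (G.s ν)) = q := by
    refine huniq _ ⟨(G.r_ident _).symm, h, G.d_ident _, (G.comp_ident ν).symm⟩
  have h2 : (G.ident (G.r ν), ν) = q := by
    refine huniq _ ⟨by rw [G.s_ident], G.d_ident _, h, (G.ident_comp ν).symm⟩
  have := h1.trans h2.symm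
  exact (congrArg Prod.fst this)

lemma deg_zero_s_eq_r (ν : G.Path) (h : G.d ν = 0) : G.s ν = G.r ν := by
  conv_lhs => rw [G.deg_zero_ident ν h]
  rw [G.s_ident]

/-- Pushing an edge of degree `e_i` along a path with no `e_i` component,
using local convexity. -/
lemma push (hlc : G.LocallyConvex) (i : Fin k) :
    ∀ (N : ℕ) (ν : G.Path), (∑ l, G.d ν l) ≤ N → G.d ν i = 0 →
    (∃ η, G.d η = eVec i ∧ G.r η = G.r ν) →
    ∃ η, G.d η = eVec i ∧ G.r η = G.s ν := by
  intro N
  induction N with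
  | zero =>
    intro ν hsum hi hη
    have hd : G.d ν = 0 := by
      funext l
      have := Finset.sum_eq_zero_iff.mp (Nat.le_zero.mp hsum)
      exact this l (Finset.mem_univ l)
    rw [G.deg_zero_s_eq_r ν hd]
    exact hη
  | succ N ih =>
    intro ν hsum hi hη
    by_cases h0 : G.d ν = 0
    · rw [G.deg_zero_s_eq_r ν h0]; exact hη
    · have : ∃ j, 0 < G.d ν j := by
        by_contra hc
        push_neg at hc
        exact h0 (funext fun l => Nat.le_zero.mp (hc l))
      obtain ⟨j, hj⟩ := this
      have hij : i ≠ j := fun hij => by rw [hij] at hi; omega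
      have hle : eVec j ≤ G.d ν := by
        intro l
        by_cases hl : l = j
        · subst hl; simp [eVec]; exact hj
        · simp [eVec, Pi.single_apply, hl]
      have hd : G.d ν = eVec j + (G.d ν - eVec j) :=
        funext fun l => (Nat.add_sub_cancel' (hle l)).symm
      obtain ⟨q, ⟨hqs, hqd1, hqd2, hqc⟩, _⟩ := G.factor ν (eVec j) (G.d ν - eVec j) hd
      obtain ⟨η, hηd, hηr⟩ := hη
      have hrη : G.r η = G.r q.1 := by
        rw [hηr, hqc, G.r_comp _ _ hqs]
      obtain ⟨_, η', hη'd, hη'r⟩ := hlc i j hij η q.1 hηd hqd1 hrη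
      have hsν : G.s ν = G.s q.2 := by rw [hqc, G.s_comp _ _ hqs]
      rw [hsν]
      refine ih q.2 ?_ ?_ ⟨η', hη'd, by rw [hη'r, hqs]⟩
      · have hsum2 : (∑ l, G.d q.2 l) + 1 = ∑ l, G.d ν l := by
          rw [hqd2]
          have : ∀ l, G.d ν l - eVec j l + eVec j l = G.d ν l :=
            fun l => Nat.sub_add_cancel (hle l)
          calc (∑ l, (G.d ν - eVec j) l) + 1
              = (∑ l, (G.d ν l - eVec j l)) + ∑ l, eVec j l := by
                simp [eVec, Finset.sum_pi_single]
            _ = ∑ l, (G.d ν l - eVec j l + eVec j l) := by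
                rw [Finset.sum_add_distrib]
            _ = ∑ l, G.d ν l := by simp_rw [this]
        omega
      · rw [hqd2]
        simp [eVec, Pi.single_apply, hij.symm, hi]

end KGraph

/-- in a locally-convex `k`-graph, `Λ^{≤ m+n} ⊆ Λ^{≤m} Λ^{≤n}`;
indeed `lam = lam(0, m ⊓ d lam) · lam(m ⊓ d lam, d lam)` with the first factor
in `Λ^{≤ m}` and the second in `Λ^{≤ n}`. -/
theorem stmt8 {k : ℕ} (G : KGraph k) (hlc : G.LocallyConvex) (m n : Fin k → ℕ)
    (lam : G.Path) (h : lam ∈ G.LeSet (m + n)) :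
    G.seg lam 0 (m ⊓ G.d lam) ∈ G.LeSet m ∧
    G.seg lam (m ⊓ G.d lam) (G.d lam) ∈ G.LeSet n ∧
    lam = G.comp (G.seg lam 0 (m ⊓ G.d lam)) (G.seg lam (m ⊓ G.d lam) (G.d lam)) := by
  obtain ⟨hdle, hmax⟩ := h
  set q : Fin k → ℕ := m ⊓ G.d lam with hq
  have hq1 : ∀ l, q l ≤ m l := fun l => min_le_left _ _
  have hq2 : ∀ l, q l ≤ G.d lam l := fun l => min_le_right _ _
  have hq3 : ∀ l, q l = m l ∨ q l = G.d lam l := fun l => by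
    rcases le_total (m l) (G.d lam l) with hle | hle
    · exact Or.inl (min_eq_left hle)
    · exact Or.inr (min_eq_right hle)
  have hqle : q ≤ G.d lam := fun l => hq2 l
  obtain ⟨hsμ, hdμ, hdν, hcomp⟩ := G.split_spec lam q hqle
  set μ := (G.split lam q).1
  set ν := (G.split lam q).2
  -- identify the segments
  have hseg1 : G.seg lam 0 q = μ := by
    have h0 : (0 : Fin k → ℕ) ≤ G.d μ := fun l => Nat.zero_le _
    have := G.split_eq μ 0 h0 (G.ident (G.r μ), μ)
      ⟨G.s_ident _, G.d_ident _, funext fun l => rfl, (G.ident_comp μ).symm⟩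
    unfold KGraph.seg
    rw [this]
  have hseg2 : G.seg lam q (G.d lam) = ν := by
    have hsplit : G.split lam (G.d lam) = (lam, G.ident (G.s lam)) := by
      refine G.split_eq lam (G.d lam) le_rfl _
        ⟨(G.r_ident _).symm, rfl, ?_, (G.comp_ident lam).symm⟩
      rw [G.d_ident]
      funext l; simp
    unfold KGraph.seg
    rw [hsplit]
  rw [hseg1, hseg2]
  have hsν : G.s ν = G.s lam := by rw [hcomp, G.s_comp _ _ hsμ]
  refine ⟨⟨?_, ?_⟩, ⟨?_, ?_⟩, hcomp⟩
  · -- d μ ≤ m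
    rw [hdμ]; intro l; exact hq1 l
  · -- no e_i extension at s μ when d μ i < m i
    intro i hilt hη
    rw [hdμ] at hilt
    have hdli : G.d lam i < m i := by rcases hq3 i with h' | h' <;> omega
    have hνi : G.d ν i = 0 := by
      rw [hdν]; simp only [Pi.sub_apply]
      rcases hq3 i with h' | h' <;> omega
    have hη' : ∃ η, G.d η = eVec i ∧ G.r η = G.r ν := by
      obtain ⟨η, h1, h2⟩ := hη
      exact ⟨η, h1, by rw [h2, hsμ]⟩
    have := G.push hlc i (∑ l, G.d ν l) ν le_rfl hνi hη'
    rw [hsν] at this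
    refine hmax i ?_ this
    have := hdle i
    simp only [Pi.add_apply] at this ⊢
    omega
  · -- d ν ≤ n
    rw [hdν]; intro l
    have h1 := hdle l
    have h2 := hq1 l; have h3 := hq2 l
    simp only [Pi.add_apply] at h1
    simp only [Pi.sub_apply]
    rcases hq3 l with h' | h' <;> omega
  · -- no e_i extension at s ν when d ν i < n i
    intro i hilt hη
    rw [hsν] at hη
    refine hmax i ?_ hη
    rw [hdν] at hilt
    simp only [Pi.sub_apply] at hilt
    have h1 := hdle i
    have h2 := hq1 i; have h3 := hq2 i
    simp only [Pi.add_apply] at h1 ⊢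
    rcases hq3 i with h' | h' <;> omega
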